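/- Let f: (M,g) → (M̄,ḡ) be an isometric immersion of an n-dimensional Riemannian manifold. For any natural numbers n_1,...,n_k with Σ_i n_i = n, define δ_mix(n_1,...,n_k) at a point of M as the supremum of S_mix(V_1,...,V_k) over pairwise orthogonal subspaces V_i ⊂ T_xM with dim V_i = n_i (computed with the intrinsic curvature of M), and define δ̄_mix(n_1,...,n_k) analogously for M̄. Then δ_mix(n_1,...,n_k) ≤ ((k−1)/(2k))·‖H̄‖² + δ̄_mix(n_1,...,n_k). -/

import Mathlib

open Finset
open scoped RealInnerProductSpace

lemma aux_swap {k : ℕ} (x : Fin k → Fin k → ℝ) (hx : ∀ i j, x i j = x j i) :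
    ∑ i, ∑ j ∈ univ.filter (fun j => j < i), x i j
      = ∑ i, ∑ j ∈ univ.filter (fun j => i < j), x i j := by
  simp_rw [Finset.sum_filter]
  rw [Finset.sum_comm]
  exact Finset.sum_congr rfl fun i _ => Finset.sum_congr rfl fun j _ => by
    by_cases hij : i < j <;> simp [hij, hx]

lemma aux_split {k : ℕ} (x : Fin k → Fin k → ℝ) (hx : ∀ i j, x i j = x j i) :
    ∑ i, ∑ j, x i j
      = ∑ i, x i i + 2 * ∑ i, ∑ j ∈ univ.filter (fun j => i < j), x i j := by
  have h1 : ∀ i : Fin k, ∑ j, x i j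
      = ∑ j ∈ univ.filter (fun j => i < j), x i j
        + (x i i + ∑ j ∈ univ.filter (fun j => j < i), x i j) := by
    intro i
    rw [← Finset.sum_filter_add_sum_filter_not univ (fun j => i < j) (x i)]
    congr 1
    have : univ.filter (fun j => ¬ i < j) = insert i (univ.filter (fun j => j < i)) := by
      ext j
      simp only [mem_filter, mem_univ, true_and, mem_insert, not_lt]
      constructor
      · intro hj
        rcases lt_or_eq_of_le hj with h' | h'
        · exact Or.inr h'
        · exact Or.inl h'
      · rintro (rfl | h')
        · exact le_rfl
        · exact h'.le
    rw [this, Finset.sum_insert (by simp)]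
  simp_rw [h1]
  rw [Finset.sum_add_distrib, Finset.sum_add_distrib, aux_swap x hx]
  ring

lemma aux_key {E : Type*} [NormedAddCommGroup E] [InnerProductSpace ℝ E]
    {k : ℕ} (hk : 2 ≤ k) (v : Fin k → E) :
    ∑ i, ∑ j ∈ univ.filter (fun j => i < j), ⟪v i, v j⟫
      ≤ (k - 1 : ℝ) / (2 * k) * ‖∑ i, v i‖ ^ 2 := by
  set S := ∑ i, ∑ j ∈ univ.filter (fun j => i < j), ⟪v i, v j⟫ with hS
  set Q := ∑ i, ‖v i‖ ^ 2 with hQ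
  have hQ0 : 0 ≤ Q := Finset.sum_nonneg fun i _ => by positivity
  have hnorm : ‖∑ i, v i‖ ^ 2 = Q + 2 * S := by
    have h1 : ‖∑ i, v i‖ ^ 2 = ∑ i, ∑ j, ⟪v i, v j⟫ := by
      rw [← real_inner_self_eq_norm_sq, sum_inner]
      exact Finset.sum_congr rfl fun i _ => inner_sum _ _ _
    rw [h1, aux_split (fun i j => ⟪v i, v j⟫) (fun i j => real_inner_comm _ _)]
    simp_rw [real_inner_self_eq_norm_sq]
    rfl
  have h2S : 2 * S ≤ (k - 1 : ℝ) * Q := by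
    have hb : S ≤ ∑ i, ∑ j ∈ univ.filter (fun j => i < j), (‖v i‖ ^ 2 + ‖v j‖ ^ 2) / 2 := by
      refine Finset.sum_le_sum fun i _ => Finset.sum_le_sum fun j _ => ?_
      nlinarith [real_inner_le_norm (v i) (v j), norm_nonneg (v i), norm_nonneg (v j),
        sq_nonneg (‖v i‖ - ‖v j‖)]
    have hc : ∑ i, ∑ j ∈ univ.filter (fun j => i < j), (‖v i‖ ^ 2 + ‖v j‖ ^ 2) / 2
        = (k - 1 : ℝ) * Q / 2 := by
      have hsplit := aux_split (fun i j => (‖v i‖ ^ 2 + ‖v j‖ ^ 2) / 2)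
        (fun i j => by ring)
      have hfull : ∑ i : Fin k, ∑ j : Fin k, (‖v i‖ ^ 2 + ‖v j‖ ^ 2) / 2 = (k : ℝ) * Q := by
        have h1 : ∀ i : Fin k, ∑ j : Fin k, (‖v i‖ ^ 2 + ‖v j‖ ^ 2) / 2
            = ((k : ℝ) * ‖v i‖ ^ 2 + Q) / 2 := by
          intro i
          rw [← Finset.sum_div]
          congr 1
          rw [Finset.sum_add_distrib, Finset.sum_const, card_univ, Fintype.card_fin,
            nsmul_eq_mul, hQ]
        simp_rw [h1]
        rw [← Finset.sum_div, Finset.sum_add_distrib, ← Finset.mul_sum, Finset.sum_const,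
          card_univ, Fintype.card_fin, nsmul_eq_mul, ← hQ]
        ring
      have hdiag : ∑ i : Fin k, (‖v i‖ ^ 2 + ‖v i‖ ^ 2) / 2 = Q := by
        rw [hQ]; exact Finset.sum_congr rfl fun i _ => by ring
      rw [hfull, hdiag] at hsplit
      linarith
    linarith
  have hkc : (2:ℝ) ≤ (k:ℝ) := by exact_mod_cast hk
  have hkpos : (0 : ℝ) < 2 * k := by linarith
  rw [hnorm, div_mul_eq_mul_div, le_div_iff₀ hkpos]
  nlinarith

lemma aux_trace {T E : Type*} [NormedAddCommGroup T] [InnerProductSpace ℝ T]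
    [NormedAddCommGroup E] [InnerProductSpace ℝ E] {n : ℕ}
    (b f' : OrthonormalBasis (Fin n) ℝ T) (h : T →ₗ[ℝ] T →ₗ[ℝ] E) :
    ∑ a, h (f' a) (f' a) = ∑ a, h (b a) (b a) := by
  have key : ∀ a, h (f' a) (f' a)
      = ∑ c, ∑ d, (⟪b c, f' a⟫ * ⟪b d, f' a⟫) • h (b c) (b d) := by
    intro a
    conv_lhs => rw [← b.sum_repr' (f' a)]
    simp only [map_sum, LinearMap.sum_apply, map_smul, LinearMap.smul_apply, Finset.smul_sum,
      smul_smul]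
    rw [Finset.sum_comm]
    exact Finset.sum_congr rfl fun c _ => Finset.sum_congr rfl fun d _ => by rw [mul_comm]
  simp_rw [key]
  rw [Finset.sum_comm]
  have hstep : ∀ c : Fin n, ∑ a, ∑ d, (⟪b c, f' a⟫ * ⟪b d, f' a⟫) • h (b c) (b d)
      = h (b c) (b c) := by
    intro c
    rw [Finset.sum_comm]
    have hsum : ∀ d : Fin n, ∑ a, ⟪b c, f' a⟫ * ⟪b d, f' a⟫ = ⟪b c, b d⟫ := by
      intro d
      rw [← f'.sum_inner_mul_inner (b c) (b d)]
      exact Finset.sum_congr rfl fun a _ => by rw [real_inner_comm (f' a) (b d)]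
    have hite : ∀ d : Fin n, ∑ a, (⟪b c, f' a⟫ * ⟪b d, f' a⟫) • h (b c) (b d)
        = (if c = d then (1:ℝ) else 0) • h (b c) (b d) := by
      intro d
      rw [← Finset.sum_smul, hsum, orthonormal_iff_ite.mp b.orthonormal]
    simp_rw [hite]
    simp
  exact Finset.sum_congr rfl fun c _ => hstep c

theorem stmt_9 {T E : Type*} [NormedAddCommGroup T] [InnerProductSpace ℝ T]
    [NormedAddCommGroup E] [InnerProductSpace ℝ E] [FiniteDimensional ℝ T]
    (n k : ℕ) (hk : 2 ≤ k) (hn : Module.finrank ℝ T = n)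
    (J : T →ₗᵢ[ℝ] E)
    (h : T →ₗ[ℝ] T →ₗ[ℝ] E)
    (hsym : ∀ X Y, h X Y = h Y X)
    (hnor : ∀ X Y Z : T, ⟪h X Y, J Z⟫ = 0)
    (Rbar : E → E → E → E → ℝ)
    (R : T → T → T → T → ℝ)
    (hGauss : ∀ X Y Z W : T, R X Y Z W = Rbar (J X) (J Y) (J Z) (J W)
        + ⟪h X W, h Y Z⟫ - ⟪h X Z, h Y W⟫)
    (p : Fin n → Fin k)
    (b : OrthonormalBasis (Fin n) ℝ T)
    (H : E) (hH : H = ∑ a : Fin n, h (b a) (b a))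
    (δbar : ℝ)
    (hδbar : ∀ g : Fin n → E, Orthonormal ℝ g →
      (∑ i : Fin k, ∑ j ∈ univ.filter (fun j => i < j),
        ∑ a ∈ univ.filter (fun a => p a = i), ∑ c ∈ univ.filter (fun c => p c = j),
          Rbar (g a) (g c) (g c) (g a)) ≤ δbar) :
    ∀ f : Fin n → T, Orthonormal ℝ f →
      (∑ i : Fin k, ∑ j ∈ univ.filter (fun j => i < j),
        ∑ a ∈ univ.filter (fun a => p a = i), ∑ c ∈ univ.filter (fun c => p c = j),
          R (f a) (f c) (f c) (f a))
        ≤ (k - 1 : ℝ) / (2 * k) * ‖H‖ ^ 2 + δbar := by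
  intro f hf
  have hkc : (2:ℝ) ≤ (k:ℝ) := by exact_mod_cast hk
  have hA : (∑ i : Fin k, ∑ j ∈ univ.filter (fun j => i < j),
      ∑ a ∈ univ.filter (fun a => p a = i), ∑ c ∈ univ.filter (fun c => p c = j),
        Rbar (J (f a)) (J (f c)) (J (f c)) (J (f a))) ≤ δbar :=
    hδbar (fun a => J (f a)) (hf.comp_linearIsometry J)
  have hC : 0 ≤ ∑ i : Fin k, ∑ j ∈ univ.filter (fun j => i < j),
      ∑ a ∈ univ.filter (fun a => p a = i), ∑ c ∈ univ.filter (fun c => p c = j),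
        ⟪h (f a) (f c), h (f c) (f a)⟫ := by
    refine Finset.sum_nonneg fun i _ => Finset.sum_nonneg fun j _ =>
      Finset.sum_nonneg fun a _ => Finset.sum_nonneg fun c _ => ?_
    rw [hsym (f c) (f a)]
    exact real_inner_self_nonneg
  have hLHS : (∑ i : Fin k, ∑ j ∈ univ.filter (fun j => i < j),
      ∑ a ∈ univ.filter (fun a => p a = i), ∑ c ∈ univ.filter (fun c => p c = j),
        R (f a) (f c) (f c) (f a))
      = (∑ i : Fin k, ∑ j ∈ univ.filter (fun j => i < j),
          ∑ a ∈ univ.filter (fun a => p a = i), ∑ c ∈ univ.filter (fun c => p c = j),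
            Rbar (J (f a)) (J (f c)) (J (f c)) (J (f a)))
        + (∑ i : Fin k, ∑ j ∈ univ.filter (fun j => i < j),
          ∑ a ∈ univ.filter (fun a => p a = i), ∑ c ∈ univ.filter (fun c => p c = j),
            ⟪h (f a) (f a), h (f c) (f c)⟫)
        - (∑ i : Fin k, ∑ j ∈ univ.filter (fun j => i < j),
          ∑ a ∈ univ.filter (fun a => p a = i), ∑ c ∈ univ.filter (fun c => p c = j),
            ⟪h (f a) (f c), h (f c) (f a)⟫) := by
    simp_rw [hGauss, Finset.sum_sub_distrib, Finset.sum_add_distrib]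
  rcases Nat.eq_zero_or_pos n with hn0 | hn0
  · subst hn0
    have hRbar0 : (∑ i : Fin k, ∑ j ∈ univ.filter (fun j => i < j),
        ∑ a ∈ univ.filter (fun a => p a = i), ∑ c ∈ univ.filter (fun c => p c = j),
          Rbar (J (f a)) (J (f c)) (J (f c)) (J (f a))) = 0 := by
      refine Finset.sum_eq_zero fun i _ => Finset.sum_eq_zero fun j _ => ?_
      refine Finset.sum_eq_zero fun a _ => a.elim0
    have hδ0 : 0 ≤ δbar := by rw [hRbar0] at hA; exact hA
    have hL0 : (∑ i : Fin k, ∑ j ∈ univ.filter (fun j => i < j),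
        ∑ a ∈ univ.filter (fun a => p a = i), ∑ c ∈ univ.filter (fun c => p c = j),
          R (f a) (f c) (f c) (f a)) = 0 := by
      refine Finset.sum_eq_zero fun i _ => Finset.sum_eq_zero fun j _ => ?_
      refine Finset.sum_eq_zero fun a _ => a.elim0
    rw [hL0]
    have : 0 ≤ (k - 1 : ℝ) / (2 * k) * ‖H‖ ^ 2 :=
      mul_nonneg (div_nonneg (by linarith) (by linarith)) (by positivity)
    linarith
  haveI : Nonempty (Fin n) := Fin.pos_iff_nonempty.mp hn0
  have hcard : Fintype.card (Fin n) = Module.finrank ℝ T := by simp [hn]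
  have hBcoe := coe_basisOfOrthonormalOfCardEqFinrank hf hcard
  set B := basisOfOrthonormalOfCardEqFinrank hf hcard with hB
  have hBo : Orthonormal ℝ ⇑B := by rwa [hBcoe]
  set fb := B.toOrthonormalBasis hBo with hfbdef
  have hfb : ⇑fb = f := by rw [Module.Basis.coe_toOrthonormalBasis, hBcoe]
  have hHf : H = ∑ a, h (f a) (f a) := by
    rw [hH, ← aux_trace b fb h, hfb]
  set v : Fin k → E := fun i => ∑ a ∈ univ.filter (fun a => p a = i), h (f a) (f a) with hvdef
  have hv : ∑ i, v i = ∑ a, h (f a) (f a) :=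
    Finset.sum_fiberwise univ p (fun a => h (f a) (f a))
  have hB2 : (∑ i : Fin k, ∑ j ∈ univ.filter (fun j => i < j),
      ∑ a ∈ univ.filter (fun a => p a = i), ∑ c ∈ univ.filter (fun c => p c = j),
        ⟪h (f a) (f a), h (f c) (f c)⟫)
      = ∑ i, ∑ j ∈ univ.filter (fun j => i < j), ⟪v i, v j⟫ := by
    refine Finset.sum_congr rfl fun i _ => Finset.sum_congr rfl fun j _ => ?_
    rw [sum_inner]
    exact Finset.sum_congr rfl fun a _ => (inner_sum _ _ _).symm
  have hkey := aux_key hk v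
  rw [hv, ← hHf] at hkey
  rw [hLHS, hB2]
  linarith
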